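/- Let $a_1,\ldots,a_n$ be distinct elements of a field $F$, $1 \leq k \leq n$, and $B \in F^{k\times(n-k)}$. For a $k$-subset $\mathcal{T} = \{t_1,\ldots,t_k\} \subseteq \{1,\ldots,n\}$, let $F_{\mathcal{T}} \in F^{(n-k)\times k}$ be the matrix with entries $f_{t,s}$ ($0\leq t \leq n-k-1$, $0 \leq s \leq k-1$) defined uniquely by $a_{t_r}^{k+t} = \sum_{s=0}^{k-1} f_{t,s} a_{t_r}^{s}$ for all $r$. Let $G_{\mathcal{T}}$ be the $k\times k$ matrix with $(i,r)$ entry $a_{t_r}^i + \sum_{j=0}^{n-k-1} b_{i,j} a_{t_r}^{k+j}$. Then $\det(G_{\mathcal{T}}) = \det(I_k + B F_{\mathcal{T}}) \cdot \prod_{1\leq r < s \leq k}(a_{t_s} - a_{t_r})$. -/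

import Mathlib

/-- Key determinant identity in Theorem 1:
`det(G_𝒯) = det(I_k + B F_𝒯) · ∏_{r < s} (a_{t_s} - a_{t_r})`. -/
theorem stmt_11 {F : Type*} [Field F] (n k : ℕ) (hk : 1 ≤ k) (hkn : k ≤ n)
    (a : Fin n → F) (ha : Function.Injective a)
    (b : Fin k → Fin (n - k) → F)
    (T : Fin k → Fin n) (hT : Function.Injective T)
    (FT : Matrix (Fin (n - k)) (Fin k) F)
    (hFT : ∀ (t : Fin (n - k)) (r : Fin k),
      a (T r) ^ (k + (t : ℕ)) = ∑ s : Fin k, FT t s * a (T r) ^ (s : ℕ))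
    (GT : Matrix (Fin k) (Fin k) F)
    (hGT : ∀ (i r : Fin k), GT i r =
      a (T r) ^ (i : ℕ) + ∑ j : Fin (n - k), b i j * a (T r) ^ (k + (j : ℕ))) :
    GT.det = (1 + Matrix.of b * FT).det *
      ∏ r : Fin k, ∏ s ∈ Finset.Ioi r, (a (T s) - a (T r)) := by
  have hfac : GT = (1 + Matrix.of b * FT) * (Matrix.vandermonde (fun r => a (T r))).transpose := by
    ext i r
    simp only [Matrix.mul_apply, Matrix.transpose_apply, Matrix.vandermonde_apply,
      Matrix.add_apply, Matrix.one_apply, hGT]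
    have : ∀ j : Fin (n - k), b i j * a (T r) ^ (k + (j : ℕ)) =
        ∑ s : Fin k, b i j * FT j s * a (T r) ^ (s : ℕ) := by
      intro j
      rw [hFT j r, Finset.mul_sum]
      simp [mul_assoc]
    rw [Finset.sum_congr rfl (fun j _ => this j), Finset.sum_comm]
    simp only [add_mul, Finset.sum_add_distrib, ite_mul, one_mul, zero_mul,
      Finset.sum_ite_eq', Finset.mem_univ, if_pos, Finset.sum_mul]
    simp [Finset.sum_ite_eq]
  rw [hfac, Matrix.det_mul, Matrix.det_transpose, Matrix.det_vandermonde]
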